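/- arXiv:2012.04871 — 4 statements merged into one kernel-verified Lean document; each statement's English description precedes it below -/
import Mathlib

section
/- For all nonnegative integers n and p, and all real x and λ, the truncated degenerate Bell polynomial satisfies Bel^{(p)}_{n,λ}(x) = Σ_{k=0}^{n} S_{2,λ}(n,k) x^k / C(k+p, k), where C(k+p,k) is the binomial coefficient. -/
open Finset

/-- Degenerate falling factorial `(x)_{n,λ} = x(x-λ)⋯(x-(n-1)λ)`. -/
def degFall (l x : ℝ) (n : ℕ) : ℝ := ∏ i ∈ Finset.range n, (x - i * l)

/-- Ordinary falling factorial `(x)_n = x(x-1)⋯(x-n+1)`. -/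
def fall (x : ℝ) (n : ℕ) : ℝ := ∏ i ∈ Finset.range n, (x - i)

/-- The degenerate exponential `e_λ(t)` as a formal power series. -/
noncomputable def degExpPS (l : ℝ) : PowerSeries ℝ :=
  PowerSeries.mk fun n => degFall l 1 n / (n.factorial : ℝ)

lemma degFall_succ (l x : ℝ) (n : ℕ) :
    degFall l x (n + 1) = degFall l x n * (x - n * l) := by
  simp [degFall, Finset.prod_range_succ]

lemma degFall_zero' (l : ℝ) (n : ℕ) (hn : n ≠ 0) : degFall l 0 n = 0 := by
  apply Finset.prod_eq_zero (i := 0)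
  · simpa using Nat.pos_of_ne_zero hn
  · simp

/-- Vandermonde-type identity for degenerate falling factorials. -/
lemma degFall_add (l a b : ℝ) : ∀ n : ℕ, degFall l (a + b) n =
    ∑ i ∈ Finset.range (n + 1),
      (n.choose i : ℝ) * degFall l a i * degFall l b (n - i) := by
  intro n
  induction n with
  | zero => simp [degFall]
  | succ n ih =>
    have key : ∀ i ∈ Finset.range (n + 1),
        (n.choose i : ℝ) * degFall l a i * degFall l b (n - i) * (a + b - n * l)
        = (n.choose i : ℝ) * degFall l a (i + 1) * degFall l b (n - i)
          + (n.choose i : ℝ) * degFall l a i * degFall l b (n - i + 1) := by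
      intro i hi
      rw [Finset.mem_range] at hi
      have hi' : i ≤ n := Nat.lt_succ_iff.mp hi
      have hcast : ((n - i : ℕ) : ℝ) = (n : ℝ) - i := by
        push_cast [hi']; ring
      rw [degFall_succ, degFall_succ, hcast]
      ring
    rw [degFall_succ, ih, Finset.sum_mul, Finset.sum_congr rfl key, Finset.sum_add_distrib]
    -- Now compute the target sum
    rw [Finset.sum_range_succ' (fun i => ((n+1).choose i : ℝ) * degFall l a i
      * degFall l b (n + 1 - i))]
    have hsplit : ∀ j ∈ Finset.range (n + 1),
        (((n+1).choose (j+1) : ℕ) : ℝ) * degFall l a (j+1) * degFall l b (n + 1 - (j+1))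
        = (n.choose (j+1) : ℝ) * degFall l a (j+1) * degFall l b (n - j)
          + (n.choose j : ℝ) * degFall l a (j+1) * degFall l b (n - j) := by
      intro j hj
      have : (n+1).choose (j+1) = n.choose (j+1) + n.choose j := by
        rw [Nat.choose_succ_succ, Nat.add_comm]
      rw [this]
      have : n + 1 - (j + 1) = n - j := by omega
      rw [this]
      push_cast
      ring
    rw [Finset.sum_congr rfl hsplit, Finset.sum_add_distrib]
    have h1 : ∑ j ∈ Finset.range (n + 1),
        (n.choose (j+1) : ℝ) * degFall l a (j+1) * degFall l b (n - j)
        + ((n+1).choose 0 : ℝ) * degFall l a 0 * degFall l b (n + 1 - 0)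
        = ∑ i ∈ Finset.range (n + 1),
          (n.choose i : ℝ) * degFall l a i * degFall l b (n - i + 1) := by
      rw [Finset.sum_range_succ' (fun i => (n.choose i : ℝ) * degFall l a i
        * degFall l b (n - i + 1)), Finset.sum_range_succ
        (fun j => (n.choose (j+1) : ℝ) * degFall l a (j+1) * degFall l b (n - j))]
      rw [Nat.choose_succ_self, Nat.cast_zero, zero_mul, zero_mul, add_zero]
      congr 1
      · apply Finset.sum_congr rfl
        intro j hj
        rw [Finset.mem_range] at hj
        have : n - (j + 1) + 1 = n - j := by omega
        rw [this]
      · simp [degFall]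
    have h2 : ∑ j ∈ Finset.range (n + 1),
        (n.choose j : ℝ) * degFall l a (j+1) * degFall l b (n - j)
        = ∑ i ∈ Finset.range (n + 1),
          (n.choose i : ℝ) * degFall l a (i+1) * degFall l b (n - i) := rfl
    rw [add_right_comm, h2, h1]
    ring

lemma coeff_degExpPS_pow (l : ℝ) (j n : ℕ) :
    PowerSeries.coeff n (degExpPS l ^ j) = degFall l j n / (n.factorial : ℝ) := by
  induction j generalizing n with
  | zero =>
    cases n with
    | zero => simp [degFall]
    | succ m =>
      rw [pow_zero]
      simp [PowerSeries.coeff_one, degFall_zero' l (m+1) (by omega)]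
  | succ j ih =>
    rw [pow_succ, mul_comm, PowerSeries.coeff_mul,
      Finset.Nat.sum_antidiagonal_eq_sum_range_succ_mk]
    have : ((j : ℝ) + 1) = (1 : ℝ) + (j : ℝ) := by ring
    push_cast
    rw [this, degFall_add, Finset.sum_div]
    apply Finset.sum_congr rfl
    intro i hi
    rw [Finset.mem_range] at hi
    have hi' : i ≤ n := Nat.lt_succ_iff.mp hi
    rw [ih]
    simp only [degExpPS, PowerSeries.coeff_mk]
    have hfac : (n.choose i : ℝ) * (i.factorial : ℝ) * ((n - i).factorial : ℝ)
        = (n.factorial : ℝ) := by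
      exact_mod_cast congrArg (Nat.cast (R := ℝ))
        (Nat.choose_mul_factorial_mul_factorial hi')
    have h1 : (i.factorial : ℝ) ≠ 0 := Nat.cast_ne_zero.mpr i.factorial_ne_zero
    have h2 : ((n - i).factorial : ℝ) ≠ 0 := Nat.cast_ne_zero.mpr (n - i).factorial_ne_zero
    have h3 : (n.factorial : ℝ) ≠ 0 := Nat.cast_ne_zero.mpr n.factorial_ne_zero
    field_simp
    rw [← hfac]
    ring

lemma coeff_sub_one_pow (l : ℝ) (k n : ℕ) :
    PowerSeries.coeff n ((degExpPS l - 1) ^ k)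
    = (∑ j ∈ Finset.range (k + 1),
        (-1 : ℝ) ^ (j + k) * (k.choose j : ℝ) * degFall l j n) / (n.factorial : ℝ) := by
  rw [sub_pow, map_sum, Finset.sum_div]
  apply Finset.sum_congr rfl
  intro j hj
  have : (-1 : PowerSeries ℝ) ^ (j + k) * degExpPS l ^ j * 1 ^ (k - j)
      * ((k.choose j : ℕ) : PowerSeries ℝ)
      = PowerSeries.C ((-1 : ℝ) ^ (j + k) * (k.choose j : ℝ)) * degExpPS l ^ j := by
    simp only [one_pow, map_mul, map_pow, map_neg, map_one, map_natCast]
    ring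
  rw [this, PowerSeries.coeff_C_mul, coeff_degExpPS_pow]
  ring

lemma alt_sum (N : ℕ) (hN : N ≠ 0) :
    ∑ m ∈ Finset.range (N + 1), (-1 : ℝ) ^ m * (N.choose m : ℝ) = 0 := by
  have := Int.alternating_sum_range_choose (n := N)
  rw [if_neg hN] at this
  have h2 : ((∑ i ∈ Finset.range (N + 1), (-1 : ℤ) ^ i * N.choose i : ℤ) : ℝ) = 0 := by
    rw [this]; norm_num
  push_cast at h2
  convert h2 using 2

lemma orth (k i : ℕ) :
    ∑ j ∈ Finset.range (k + 1), (-1 : ℝ) ^ (j + k) * (k.choose j : ℝ) * (j.choose i : ℝ)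
    = if i = k then 1 else 0 := by
  rcases eq_or_ne i k with rfl | hik
  · rw [if_pos rfl]
    rw [Finset.sum_range_succ]
    have : ∑ j ∈ Finset.range i, (-1:ℝ) ^ (j + i) * (i.choose j : ℝ) * (j.choose i : ℝ) = 0 := by
      apply Finset.sum_eq_zero
      intro j hj
      rw [Finset.mem_range] at hj
      rw [Nat.choose_eq_zero_of_lt hj]
      simp
    rw [this, zero_add]
    simp [← two_mul, pow_mul]
  · rw [if_neg hik]
    rcases lt_or_gt_of_ne hik with hlt | hgt
    · -- i < k
      have hsub : ∑ j ∈ Finset.range (k + 1),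
          (-1:ℝ) ^ (j + k) * (k.choose j : ℝ) * (j.choose i : ℝ)
          = ∑ j ∈ Finset.Ico i (k + 1),
            (-1:ℝ) ^ (j + k) * (k.choose j : ℝ) * (j.choose i : ℝ) := by
        rw [Finset.range_eq_Ico]
        rw [← Finset.sum_Ico_consecutive _ (Nat.zero_le i) (by omega)]
        have : ∑ j ∈ Finset.Ico 0 i,
            (-1:ℝ) ^ (j + k) * (k.choose j : ℝ) * (j.choose i : ℝ) = 0 := by
          apply Finset.sum_eq_zero
          intro j hj
          rw [Finset.mem_Ico] at hj
          rw [Nat.choose_eq_zero_of_lt hj.2]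
          simp
        rw [this, zero_add]
      rw [hsub, Finset.sum_Ico_eq_sum_range]
      have hterm : ∀ m ∈ Finset.range (k + 1 - i),
          (-1:ℝ) ^ (i + m + k) * (k.choose (i + m) : ℝ) * ((i + m).choose i : ℝ)
          = ((-1:ℝ) ^ (i + k) * (k.choose i : ℝ))
            * ((-1:ℝ) ^ m * ((k - i).choose m : ℝ)) := by
        intro m hm
        rw [Finset.mem_range] at hm
        have hle : i + m ≤ k := by omega
        have htri : k.choose (i + m) * (i + m).choose i
            = k.choose i * (k - i).choose (i + m - i) := Nat.choose_mul (by omega)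
        have h2 : i + m - i = m := by omega
        rw [h2] at htri
        have hre : (k.choose (i + m) : ℝ) * ((i + m).choose i : ℝ)
            = (k.choose i : ℝ) * ((k - i).choose m : ℝ) := by exact_mod_cast htri
        have hsign : (-1 : ℝ) ^ (i + m + k) = (-1) ^ (i + k) * (-1) ^ m := by
          rw [show i + m + k = (i + k) + m by omega, pow_add]
        rw [hsign]
        linear_combination ((-1 : ℝ) ^ (i + k) * (-1) ^ m) * hre
      rw [Finset.sum_congr rfl hterm, ← Finset.mul_sum]
      have : k + 1 - i = (k - i) + 1 := by omega
      rw [this, alt_sum (k - i) (by omega), mul_zero]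
    · -- k < i
      apply Finset.sum_eq_zero
      intro j hj
      rw [Finset.mem_range] at hj
      rw [Nat.choose_eq_zero_of_lt (show j < i by omega)]
      simp

lemma fall_nat (j i : ℕ) : fall (j : ℝ) i = (i.factorial : ℝ) * (j.choose i : ℝ) := by
  rcases le_or_gt i j with h | h
  · have : fall (j : ℝ) i = ((∏ m ∈ Finset.range i, (j - m) : ℕ) : ℝ) := by
      rw [Nat.cast_prod]
      apply Finset.prod_congr rfl
      intro m hm
      rw [Finset.mem_range] at hm
      rw [Nat.cast_sub (by omega)]
    rw [this, ← Nat.descFactorial_eq_prod_range, Nat.descFactorial_eq_factorial_mul_choose]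
    push_cast; ring
  · rw [Nat.choose_eq_zero_of_lt h, Nat.cast_zero, mul_zero]
    apply Finset.prod_eq_zero (i := j)
    · exact Finset.mem_range.mpr h
    · simp

theorem truncated_degenerate_Bell_explicit
    (l x : ℝ) (n p : ℕ) (S2 : ℕ → ℕ → ℝ)
    (hS : ∀ (y : ℝ) (m : ℕ),
      degFall l y m = ∑ k ∈ Finset.range (m + 1), S2 m k * fall y k)
    (Bel : ℕ → ℝ)
    (hBel : ∀ m : ℕ,
      (∑' k : ℕ, (p.factorial : ℝ) * x ^ k / ((k + p).factorial : ℝ) *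
        PowerSeries.coeff m ((degExpPS l - 1) ^ k))
        = Bel m / (m.factorial : ℝ)) :
    Bel n = ∑ k ∈ Finset.range (n + 1), S2 n k * x ^ k / (((k + p).choose k : ℕ) : ℝ) := by
  have hfacn : (n.factorial : ℝ) ≠ 0 := Nat.cast_ne_zero.mpr n.factorial_ne_zero
  -- Key: coefficient formula
  have hcoeff : ∀ k : ℕ, PowerSeries.coeff n ((degExpPS l - 1) ^ k)
      = (if k ≤ n then S2 n k * (k.factorial : ℝ) else 0) / (n.factorial : ℝ) := by
    intro k
    rw [coeff_sub_one_pow]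
    congr 1
    have hj : ∀ j ∈ Finset.range (k + 1),
        (-1:ℝ) ^ (j + k) * (k.choose j : ℝ) * degFall l (j : ℝ) n
        = ∑ i ∈ Finset.range (n + 1),
          S2 n i * (i.factorial : ℝ)
            * ((-1:ℝ) ^ (j + k) * (k.choose j : ℝ) * (j.choose i : ℝ)) := by
      intro j hj
      rw [hS (j : ℝ) n, Finset.mul_sum]
      apply Finset.sum_congr rfl
      intro i hi
      rw [fall_nat]
      ring
    rw [Finset.sum_congr rfl hj, Finset.sum_comm]
    have : ∀ i ∈ Finset.range (n + 1),
        ∑ j ∈ Finset.range (k + 1),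
          S2 n i * (i.factorial : ℝ)
            * ((-1:ℝ) ^ (j + k) * (k.choose j : ℝ) * (j.choose i : ℝ))
        = S2 n i * (i.factorial : ℝ) * (if i = k then 1 else 0) := by
      intro i hi
      rw [← Finset.mul_sum, orth]
    rw [Finset.sum_congr rfl this]
    rcases le_or_gt k n with hkn | hkn
    · rw [if_pos hkn, Finset.sum_eq_single k]
      · simp
      · intro i hi hik
        rw [if_neg hik, mul_zero]
      · intro h
        exact absurd (Finset.mem_range.mpr (by omega)) h
    · rw [if_neg (by omega)]
      apply Finset.sum_eq_zero
      intro i hi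
      rw [Finset.mem_range] at hi
      rw [if_neg (by omega), mul_zero]
  -- the tsum has finite support
  have hfun : ∀ k : ℕ, k ∉ Finset.range (n + 1) →
      (p.factorial : ℝ) * x ^ k / ((k + p).factorial : ℝ) *
        PowerSeries.coeff n ((degExpPS l - 1) ^ k) = 0 := by
    intro k hk
    rw [Finset.mem_range] at hk
    rw [hcoeff k, if_neg (by omega)]
    simp
  have htsum := hBel n
  rw [tsum_eq_sum hfun] at htsum
  have hBeln : Bel n = (n.factorial : ℝ) *
      ∑ k ∈ Finset.range (n + 1), (p.factorial : ℝ) * x ^ k / ((k + p).factorial : ℝ) *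
        PowerSeries.coeff n ((degExpPS l - 1) ^ k) := by
    rw [htsum]
    field_simp
  rw [hBeln, Finset.mul_sum]
  apply Finset.sum_congr rfl
  intro k hk
  rw [Finset.mem_range] at hk
  rw [hcoeff k, if_pos (by omega)]
  have hch : (((k + p).choose k : ℕ) : ℝ) * (k.factorial : ℝ) * (p.factorial : ℝ)
      = ((k + p).factorial : ℝ) := by
    have h := Nat.choose_mul_factorial_mul_factorial (Nat.le_add_right k p)
    rw [Nat.add_sub_cancel_left] at h
    exact_mod_cast h
  have h1 : ((k + p).factorial : ℝ) ≠ 0 := Nat.cast_ne_zero.mpr (k + p).factorial_ne_zero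
  have h2 : (((k + p).choose k : ℕ) : ℝ) ≠ 0 :=
    Nat.cast_ne_zero.mpr (Nat.choose_pos (Nat.le_add_right k p)).ne'
  have h3 : (k.factorial : ℝ) ≠ 0 := Nat.cast_ne_zero.mpr k.factorial_ne_zero
  field_simp
  linear_combination (S2 n k * x ^ k) * hch
end

section
/- For every nonnegative integer n and positive integer p, p ∫_0^1 Bel_{n,λ}(x)(1-x)^{p-1} dx = Bel^{(p)}_{n,λ}, where Bel^{(p)}_{n,λ} = Σ_{k=0}^{n} S_{2,λ}(n,k)/C(k+p,k). -/
open Finset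

lemma beta_nat (q : ℕ) : ∀ k : ℕ, ∫ x in (0:ℝ)..1, x ^ k * (1 - x) ^ q
    = (k.factorial * q.factorial : ℝ) / (k + q + 1).factorial := by
  induction q with
  | zero =>
    intro k
    have hk : ((k:ℝ) + 1) ≠ 0 := by positivity
    simp [integral_pow, Nat.factorial_succ]
    field_simp
  | succ q IH =>
    intro k
    have hk : ((k:ℝ) + 1) ≠ 0 := by positivity
    have hu : ∀ x ∈ Set.uIcc (0:ℝ) 1, HasDerivAt (fun x : ℝ => (1 - x) ^ (q + 1))
        (-( (q+1) * (1 - x) ^ q)) x := by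
      intro x _
      have h1 : HasDerivAt (fun x : ℝ => 1 - x) (-1) x := by
        simpa using (hasDerivAt_id x).const_sub 1
      have := h1.pow (q+1)
      simpa [Pi.pow_def, mul_comm, mul_assoc, mul_left_comm] using this
    have hv : ∀ x ∈ Set.uIcc (0:ℝ) 1, HasDerivAt (fun x : ℝ => x ^ (k+1) / (k+1))
        (x ^ k) x := by
      intro x _
      have := (hasDerivAt_pow (k+1) x).div_const ((k:ℝ)+1)
      simpa [mul_comm, mul_div_assoc, Nat.cast_add, hk] using this
    have hiu : IntervalIntegrable (fun x : ℝ => -((q+1) * (1 - x) ^ q)) MeasureTheory.volume 0 1 := by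
      apply Continuous.intervalIntegrable; continuity
    have hiv : IntervalIntegrable (fun x : ℝ => x ^ k) MeasureTheory.volume 0 1 := by
      apply Continuous.intervalIntegrable; continuity
    have ibp := intervalIntegral.integral_mul_deriv_eq_deriv_mul hu hv hiu hiv
    have key : ∫ x in (0:ℝ)..1, x ^ k * (1 - x) ^ (q + 1)
        = ((q:ℝ)+1) / ((k:ℝ)+1) * ∫ x in (0:ℝ)..1, x ^ (k+1) * (1 - x) ^ q := by
      have : (∫ x in (0:ℝ)..1, (1 - x) ^ (q+1) * x ^ k)
          = ((q:ℝ)+1) / ((k:ℝ)+1) * ∫ x in (0:ℝ)..1, x ^ (k+1) * (1 - x) ^ q := by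
        rw [ibp]
        simp only [one_pow, sub_self, zero_pow (Nat.succ_ne_zero q), zero_pow (Nat.succ_ne_zero k),
          zero_mul, mul_zero, zero_div, sub_zero, zero_sub]
        rw [← intervalIntegral.integral_neg, ← intervalIntegral.integral_const_mul]
        apply intervalIntegral.integral_congr
        intro x _
        simp only
        field_simp
      rw [← this]; congr 1; ext x; ring
    rw [key, IH (k+1)]
    rw [Nat.factorial_succ (k), Nat.factorial_succ q]
    have h2 : (k + 1 + q + 1) = (k + (q+1) + 1) := by ring
    rw [h2]
    have h3 : ((k + (q+1) + 1).factorial : ℝ) ≠ 0 := by positivity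
    push_cast
    field_simp

theorem integral_rep_truncated_degenerate_Bell
    (l : ℝ) (n p : ℕ) (hp : 0 < p) (S2 : ℕ → ℕ → ℝ)
    (hS : ∀ (y : ℝ) (m : ℕ),
      degFall l y m = ∑ k ∈ Finset.range (m + 1), S2 m k * fall y k) :
    (p : ℝ) * ∫ x in (0:ℝ)..1,
        (∑ k ∈ Finset.range (n + 1), S2 n k * x ^ k) * (1 - x) ^ (p - 1)
      = ∑ k ∈ Finset.range (n + 1), S2 n k / (((k + p).choose k : ℕ) : ℝ) := by
  have hint : ∀ k : ℕ, IntervalIntegrable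
      (fun x : ℝ => S2 n k * (x ^ k * (1 - x) ^ (p - 1))) MeasureTheory.volume 0 1 := by
    intro k
    apply Continuous.intervalIntegrable
    continuity
  have e1 : (∫ x in (0:ℝ)..1,
        (∑ k ∈ Finset.range (n + 1), S2 n k * x ^ k) * (1 - x) ^ (p - 1))
      = ∑ k ∈ Finset.range (n + 1),
        S2 n k * ((k.factorial * (p-1).factorial : ℝ) / (k + (p-1) + 1).factorial) := by
    have hgg : ∀ x : ℝ, (∑ k ∈ Finset.range (n + 1), S2 n k * x ^ k) * (1 - x) ^ (p - 1)
        = ∑ k ∈ Finset.range (n + 1), S2 n k * (x ^ k * (1 - x) ^ (p - 1)) := by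
      intro x
      rw [Finset.sum_mul]
      exact Finset.sum_congr rfl fun k _ => by ring
    simp_rw [hgg]
    rw [intervalIntegral.integral_finset_sum (fun k _ => hint k)]
    refine Finset.sum_congr rfl fun k _ => ?_
    rw [intervalIntegral.integral_const_mul, beta_nat]
  rw [e1, Finset.mul_sum]
  refine Finset.sum_congr rfl fun k _ => ?_
  have hk2 : k + (p - 1) + 1 = k + p := by omega
  rw [hk2]
  have hc : ((k + p).choose k : ℕ) * k.factorial * p.factorial = (k + p).factorial :=
    Nat.add_choose_mul_factorial_mul_factorial k p ▸ by
      rw [Nat.choose_symm_add]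
  have hpf : (p : ℕ) * (p - 1).factorial = p.factorial := Nat.mul_factorial_pred hp.ne'
  have hcR : ((k + p).choose k : ℝ) * k.factorial * p.factorial = (k + p).factorial := by
    exact_mod_cast hc
  have hpfR : (p : ℝ) * (p - 1).factorial = p.factorial := by exact_mod_cast hpf
  have h1 : ((k + p).factorial : ℝ) ≠ 0 := by positivity
  have h2 : (((k + p).choose k : ℕ) : ℝ) ≠ 0 := by
    have := Nat.choose_pos (Nat.le_add_right k p)
    positivity
  field_simp
  linear_combination S2 n k * (((k + p).choose k : ℝ) * k.factorial) * hpfR + S2 n k * hcR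
end

section
/- For nonnegative integers n and positive integers p, Bel^{(p)}_{n,λ} = Σ_{k=0}^{n} Σ_{m=0}^{p-1} (m+1) C(p, m+1) (-1)^m S_{2,λ}(n,k) / (k+m+1). -/
open Finset

lemma auxA : ∀ (p k : ℕ), ∑ m ∈ Finset.range (p+1), (-1:ℝ)^m * (p.choose m : ℝ) / ((k:ℝ)+m+1)
    = (k.factorial : ℝ) * p.factorial / (k+p+1).factorial := by
  intro p
  induction p with
  | zero =>
    intro k
    simp [Nat.factorial_succ]
    field_simp
  | succ p ih =>
    intro k
    have hT : ∑ m ∈ Finset.range (p+1), (-1:ℝ)^m * (p.choose (m+1) : ℝ) / ((k:ℝ)+m+2)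
        = -((k.factorial : ℝ) * p.factorial / (k+p+1).factorial) + 1/((k:ℝ)+1) := by
      have h0 : ∑ m ∈ Finset.range (p+2), (-1:ℝ)^m * (p.choose m : ℝ) / ((k:ℝ)+m+1)
          = (k.factorial : ℝ) * p.factorial / (k+p+1).factorial := by
        rw [Finset.sum_range_succ, Nat.choose_succ_self]
        simpa using ih k
      rw [Finset.sum_range_succ'] at h0
      have h1 : ∀ m ∈ Finset.range (p+1),
          (-1:ℝ)^(m+1) * (p.choose (m+1) : ℝ) / ((k:ℝ)+((m+1:ℕ):ℝ)+1)
          = -((-1:ℝ)^m * (p.choose (m+1) : ℝ) / ((k:ℝ)+m+2)) := by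
        intro m _
        push_cast
        ring
      rw [Finset.sum_congr rfl h1, Finset.sum_neg_distrib] at h0
      simp only [pow_zero, Nat.choose_zero_right, Nat.cast_one, Nat.cast_zero, add_zero,
        one_mul] at h0
      linarith [h0]
    rw [Finset.sum_range_succ']
    have h1 : ∀ m ∈ Finset.range (p+1),
        (-1:ℝ)^(m+1) * ((p+1).choose (m+1) : ℝ) / ((k:ℝ)+((m+1:ℕ):ℝ)+1)
        = -((-1:ℝ)^m * (p.choose m : ℝ) / (((k+1:ℕ):ℝ)+m+1))
          - (-1:ℝ)^m * (p.choose (m+1) : ℝ) / ((k:ℝ)+m+2) := by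
      intro m _
      rw [Nat.choose_succ_succ]
      push_cast
      ring
    rw [Finset.sum_congr rfl h1, Finset.sum_sub_distrib, Finset.sum_neg_distrib,
      ih (k+1), hT]
    have hf2 : ((k+p+1).factorial : ℝ) ≠ 0 := by positivity
    have hk1 : ((k:ℝ)+1) ≠ 0 := by positivity
    have hkp : ((k:ℝ)+(p:ℝ)+2) ≠ 0 := by positivity
    have e1 : (k+(p+1)+1) = (k+p+1)+1 := by ring
    have e2 : (k+1+p+1) = (k+p+1)+1 := by ring
    rw [e1, e2, Nat.factorial_succ (k+p+1), Nat.factorial_succ k, Nat.factorial_succ p]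
    push_cast
    simp only [pow_zero, Nat.choose_zero_right, Nat.cast_one, Nat.cast_zero, add_zero, one_mul]
    field_simp
    ring

theorem truncated_degenerate_Bell_second_explicit
    (l : ℝ) (n p : ℕ) (hp : 0 < p) (S2 : ℕ → ℕ → ℝ)
    (hS : ∀ (y : ℝ) (m : ℕ),
      degFall l y m = ∑ k ∈ Finset.range (m + 1), S2 m k * fall y k) :
    (∑ k ∈ Finset.range (n + 1), S2 n k / (((k + p).choose k : ℕ) : ℝ))
      = ∑ k ∈ Finset.range (n + 1), ∑ m ∈ Finset.range p,
          ((m + 1 : ℕ) : ℝ) * ((p.choose (m + 1) : ℕ) : ℝ) * (-1 : ℝ) ^ m * S2 n k /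
            ((k + m + 1 : ℕ) : ℝ) := by
  obtain ⟨q, rfl⟩ := Nat.exists_eq_succ_of_ne_zero hp.ne'
  refine Finset.sum_congr rfl (fun k _ => ?_)
  have h1 : ∀ m ∈ Finset.range (q+1),
      ((m+1:ℕ):ℝ) * (((q+1).choose (m+1)):ℝ) * (-1:ℝ)^m * S2 n k / ((k+m+1:ℕ):ℝ)
      = ((q:ℝ)+1) * S2 n k * ((-1:ℝ)^m * (q.choose m : ℝ) / ((k:ℝ)+m+1)) := by
    intro m _
    have hc : (((q+1).choose (m+1) : ℕ):ℝ) * ((m:ℝ)+1) = ((q:ℝ)+1) * (q.choose m : ℝ) := by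
      exact_mod_cast (Nat.add_one_mul_choose_eq q m).symm
    have hk : ((k:ℝ)+(m:ℝ)+1) ≠ 0 := by positivity
    push_cast
    field_simp
    linear_combination (S2 n k) * hc
  rw [Finset.sum_congr rfl h1, ← Finset.mul_sum, auxA q k]
  have hch : ((k+(q+1)).choose k) * k.factorial * (q+1).factorial = (k+(q+1)).factorial := by
    have := Nat.choose_mul_factorial_mul_factorial (Nat.le_add_right k (q+1))
    simpa using this
  have hcpos : 0 < (k+(q+1)).choose k := Nat.choose_pos (Nat.le_add_right k (q+1))
  have hC : (((k+(q+1)).choose k : ℕ):ℝ) ≠ 0 := by exact_mod_cast hcpos.ne'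
  have hfk : ((k.factorial:ℕ):ℝ) ≠ 0 := by positivity
  have hfq : (((k+q+1).factorial:ℕ):ℝ) ≠ 0 := by positivity
  have hchR : (((k+(q+1)).choose k : ℕ):ℝ) * k.factorial * (q+1).factorial
      = ((k+(q+1)).factorial : ℝ) := by exact_mod_cast congrArg (Nat.cast (R := ℝ)) hch
  have e : k+(q+1) = k+q+1 := by ring
  rw [e] at hchR
  rw [Nat.factorial_succ q] at hchR
  push_cast at hchR
  rw [show k+(q+1) = k+q+1 from by ring]
  rw [e] at hC
  field_simp
  linear_combination (-(S2 n k)) * hchR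
end

section
/- For all nonnegative integers m and real x, λ, the degenerate Bell polynomial satisfies the Dobinski formula Bel_{m,λ}(x) = e^{-x} Σ_{k=0}^{∞} (k)_{m,λ} x^k / k!, with the series converging absolutely for every real x. -/
open Finset

lemma fall_nat_cast (k j : ℕ) : fall (k : ℝ) j = (k.descFactorial j : ℝ) := by
  induction j with
  | zero => simp [fall]
  | succ j ih =>
    rw [fall, Finset.prod_range_succ, ← fall, ih, Nat.descFactorial_succ]
    rcases le_or_gt j k with h | h
    · push_cast [h]
      ring
    · rw [Nat.descFactorial_eq_zero_iff_lt.mpr h]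
      simp

lemma fall_shift (n j : ℕ) : fall ((n + j : ℕ) : ℝ) j = (n + j).factorial / n.factorial := by
  rw [fall_nat_cast]
  have h := Nat.factorial_mul_descFactorial (show j ≤ n + j by omega)
  have : ((n + j - j).factorial : ℝ) * ((n+j).descFactorial j : ℝ) = ((n+j).factorial : ℝ) := by
    exact_mod_cast congrArg (Nat.cast : ℕ → ℝ) h
  rw [Nat.add_sub_cancel] at this
  field_simp [← this]
  linarith [this]

lemma g_summable_abs (x : ℝ) (j : ℕ) :
    Summable (fun k : ℕ => |fall (k : ℝ) j * x ^ k / (k.factorial : ℝ)|) := by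
  rw [← summable_nat_add_iff j]
  have : (fun n : ℕ => |fall ((n + j : ℕ) : ℝ) j * x ^ (n + j) / ((n + j).factorial : ℝ)|)
      = fun n : ℕ => ((n + j).factorial / n.factorial) * (|x| ^ (n + j) / ((n + j).factorial : ℝ)) := by
    funext n
    rw [fall_shift]
    rw [abs_div, abs_mul, abs_pow, abs_of_nonneg (by positivity : (0:ℝ) ≤ ((n+j).factorial : ℝ) / n.factorial),
      Nat.abs_cast]
    ring
  rw [this]
  have : (fun n : ℕ => ((n + j).factorial / n.factorial : ℝ) * (|x| ^ (n + j) / ((n + j).factorial : ℝ)))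
      = fun n : ℕ => |x| ^ j * (|x| ^ n / n.factorial) := by
    funext n
    have h1 : ((n + j).factorial : ℝ) ≠ 0 := by positivity
    have h2 : (n.factorial : ℝ) ≠ 0 := by positivity
    field_simp
    ring
  rw [this]
  exact (Real.summable_pow_div_factorial |x|).mul_left _

lemma g_tsum (x : ℝ) (j : ℕ) :
    ∑' k : ℕ, fall (k : ℝ) j * x ^ k / (k.factorial : ℝ) = x ^ j * Real.exp x := by
  have hsum : Summable (fun k : ℕ => fall (k : ℝ) j * x ^ k / (k.factorial : ℝ)) :=
    summable_abs_iff.mp (g_summable_abs x j)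
  have key := (hsum.sum_add_tsum_nat_add j).symm
  have hzero : ∑ i ∈ Finset.range j, fall (i : ℝ) j * x ^ i / (i.factorial : ℝ) = 0 := by
    apply Finset.sum_eq_zero
    intro i hi
    rw [fall_nat_cast, Nat.descFactorial_eq_zero_iff_lt.mpr (Finset.mem_range.mp hi)]
    simp
  have hshift : (fun n : ℕ => fall ((n + j : ℕ) : ℝ) j * x ^ (n + j) / ((n + j).factorial : ℝ))
      = fun n : ℕ => x ^ j * (x ^ n / n.factorial) := by
    funext n
    rw [fall_shift]
    have h1 : ((n + j).factorial : ℝ) ≠ 0 := by positivity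
    have h2 : (n.factorial : ℝ) ≠ 0 := by positivity
    rw [pow_add]
    field_simp
  rw [key, hzero, zero_add]
  rw [hshift, tsum_mul_left]
  congr 1
  rw [Real.exp_eq_exp_ℝ, NormedSpace.exp_eq_tsum_div]

theorem dobinski_degenerate_Bell_polynomial
    (l x : ℝ) (m : ℕ)
    (S2 : ℕ → ℕ → ℝ)
    (hS : ∀ (y : ℝ) (j : ℕ),
      degFall l y j = ∑ k ∈ Finset.range (j + 1), S2 j k * fall y k) :
    Summable (fun k : ℕ => |degFall l k m * x ^ k / (k.factorial : ℝ)|) ∧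
    (∑ k ∈ Finset.range (m + 1), S2 m k * x ^ k)
      = Real.exp (-x) * ∑' k : ℕ, degFall l k m * x ^ k / (k.factorial : ℝ) := by
  have hF : ∀ k : ℕ, degFall l (k : ℝ) m * x ^ k / (k.factorial : ℝ)
      = ∑ j ∈ Finset.range (m + 1), S2 m j * (fall (k : ℝ) j * x ^ k / (k.factorial : ℝ)) := by
    intro k
    rw [hS (k : ℝ) m, Finset.sum_mul, Finset.sum_div]
    apply Finset.sum_congr rfl
    intro j _
    ring
  have hFsummable : ∀ j ∈ Finset.range (m + 1),
      Summable (fun k : ℕ => S2 m j * (fall (k : ℝ) j * x ^ k / (k.factorial : ℝ))) := by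
    intro j _
    exact (summable_abs_iff.mp (g_summable_abs x j)).mul_left _
  have hsum : Summable (fun k : ℕ => degFall l (k : ℝ) m * x ^ k / (k.factorial : ℝ)) := by
    have := summable_sum hFsummable
    simpa only [← hF] using this
  constructor
  · exact summable_abs_iff.mpr hsum
  · have h1 : (∑' k : ℕ, degFall l (k : ℝ) m * x ^ k / (k.factorial : ℝ))
        = ∑ j ∈ Finset.range (m + 1), S2 m j * (x ^ j * Real.exp x) := by
      calc (∑' k : ℕ, degFall l (k : ℝ) m * x ^ k / (k.factorial : ℝ))
          = ∑' k : ℕ, ∑ j ∈ Finset.range (m + 1), S2 m j * (fall (k : ℝ) j * x ^ k / (k.factorial : ℝ)) := by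
            exact tsum_congr hF
        _ = ∑ j ∈ Finset.range (m + 1), ∑' k : ℕ, S2 m j * (fall (k : ℝ) j * x ^ k / (k.factorial : ℝ)) :=
            Summable.tsum_finsetSum hFsummable
        _ = ∑ j ∈ Finset.range (m + 1), S2 m j * (x ^ j * Real.exp x) := by
            apply Finset.sum_congr rfl
            intro j _
            rw [tsum_mul_left, g_tsum]
    rw [h1, Finset.mul_sum]
    apply Finset.sum_congr rfl
    intro j _
    rw [show Real.exp (-x) * (S2 m j * (x ^ j * Real.exp x))
        = S2 m j * x ^ j * (Real.exp (-x) * Real.exp x) by ring, ← Real.exp_add]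
    simp
end
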